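/- One-dimensional Laplace asymptotics for exit probability: let f : ℝ → ℝ be smooth, z₁ < z₂ with f'(z₁) < 0, f'(z₂) > 0, f(z₁) < f(z₂), and suppose f has a unique critical point x₀ in (z₁, z₂). Let w_h(x) = (∫_{z₁}^x e^{2f/h})/(∫_{z₁}^{z₂} e^{2f/h}). Then for any fixed x ∈ (z₁, z₂) with f(x) < f(z₁), as h → 0, w_h(x) = −(f'(z₂)/f'(z₁)) e^{−(2/h)(f(z₂)−f(z₁))} (1 + O(h)). -/

import Mathlib

open MeasureTheory Set


lemma exp_diff_le {u v w : ℝ} (hu : u ≤ w) (hv : v ≤ w) :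
    |Real.exp u - Real.exp v| ≤ Real.exp w * |u - v| := by
  wlog h : v ≤ u generalizing u v
  · rw [abs_sub_comm, abs_sub_comm u v]; exact this hv hu (le_of_not_ge h)
  rw [abs_of_nonneg (sub_nonneg.mpr (Real.exp_le_exp.mpr h)), abs_of_nonneg (sub_nonneg.mpr h)]
  have h1 : Real.exp u - Real.exp v = Real.exp u * (1 - Real.exp (v - u)) := by
    rw [mul_sub, mul_one, ← Real.exp_add]; ring_nf
  have h2 : 1 - Real.exp (v - u) ≤ u - v := by
    have := Real.add_one_le_exp (v - u); linarith
  rw [h1]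
  calc Real.exp u * (1 - Real.exp (v - u)) ≤ Real.exp u * (u - v) := by
        apply mul_le_mul_of_nonneg_left h2 (Real.exp_pos u).le
    _ ≤ Real.exp w * (u - v) := by
        apply mul_le_mul_of_nonneg_right (Real.exp_le_exp.mpr hu) (by linarith)

lemma sq_le_four_exp {y : ℝ} (hy : 0 ≤ y) : y ^ 2 ≤ 4 * Real.exp y := by
  have h1 : y / 2 ≤ Real.exp (y / 2) := by have := Real.add_one_le_exp (y/2); linarith
  have h2 : (y/2)^2 ≤ (Real.exp (y/2))^2 := pow_le_pow_left₀ (by linarith) h1 2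
  have h3 : (Real.exp (y/2))^2 = Real.exp y := by
    rw [← Real.exp_nat_mul]; ring_nf
  nlinarith

lemma exp_neg_le {y : ℝ} (hy : 0 < y) : Real.exp (-y) ≤ 4 / y ^ 2 := by
  rw [Real.exp_neg, inv_le_iff_one_le_mul₀ (Real.exp_pos y), div_mul_eq_mul_div,
    le_div_iff₀ (by positivity : (0:ℝ) < y ^ 2)]
  nlinarith [sq_le_four_exp hy.le]

lemma integral_exp_aff (lam a b : ℝ) (h : lam ≠ 0) :
    ∫ t in a..b, Real.exp (lam * (t - a)) = (Real.exp (lam * (b - a)) - 1) / lam := by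
  have hd : ∀ t ∈ Set.uIcc a b, HasDerivAt (fun s => Real.exp (lam * (s - a)) / lam)
      (Real.exp (lam * (t - a))) t := by
    intro t _
    have h1 : HasDerivAt (fun s => lam * (s - a)) lam t := by
      simpa using ((hasDerivAt_id t).sub_const a).const_mul lam
    have h2 := h1.exp
    have h3 := h2.div_const lam
    simpa [mul_div_assoc, mul_comm, mul_div_cancel_right₀, h] using h3
  have hint : IntervalIntegrable (fun t => Real.exp (lam * (t - a))) volume a b := by
    apply Continuous.intervalIntegrable; continuity
  have := intervalIntegral.integral_eq_sub_of_hasDerivAt hd hint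
  rw [this]; simp [sub_div]


set_option maxHeartbeats 2000000 in
lemma laplace_endpoint (g : ℝ → ℝ) (hg : ContDiff ℝ (⊤:ℕ∞) g) (a b : ℝ) (hab : a < b)
    (hneg : ∀ t ∈ Set.Ioc a b, g t < g a) (hm : deriv g a < 0) :
    ∃ C > (0:ℝ), ∀ h : ℝ, 0 < h → h < 1 →
      |(∫ t in a..b, Real.exp ((g t - g a) / h)) - h / (-(deriv g a))| ≤ C * h^2 := by
  set m := -(deriv g a) with hmdef
  have hm0 : 0 < m := by simp [hmdef]; linarith
  have hgc : Continuous g := hg.continuous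
  have hg' : ContDiff ℝ (⊤:ℕ∞) (deriv g) := (contDiff_infty_iff_deriv.mp hg).2
  have hg'c : Continuous (deriv g) := hg'.continuous
  have hg''c : Continuous (deriv (deriv g)) := (contDiff_infty_iff_deriv.mp hg').2.continuous
  obtain ⟨L, hL⟩ := (isCompact_Icc (a := a) (b := b)).exists_bound_of_continuousOn
    hg''c.continuousOn
  set L' := max L 1 with hL'def
  have hL'0 : 0 < L' := lt_of_lt_of_le one_pos (le_max_right L 1)
  -- Lipschitz bound for deriv g
  have hlip : ∀ t ∈ Icc a b, |deriv g t - deriv g a| ≤ L' * (t - a) := by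
    intro t ht
    have key := Convex.norm_image_sub_le_of_norm_deriv_le (f := deriv g) (s := Icc a b)
      (fun s _ => (hg'.differentiable (by simp)).differentiableAt)
      (fun s hs => le_trans (hL s hs) (le_max_left L 1)) (convex_Icc a b)
      (left_mem_Icc.mpr (le_of_lt hab)) ht
    simpa [Real.norm_eq_abs, abs_of_nonneg (sub_nonneg.mpr ht.1)] using key
  -- Taylor bound
  have htay : ∀ t ∈ Icc a b, |g t - g a + m * (t - a)| ≤ L' * (t - a) ^ 2 := by
    intro t ht
    have hφd : ∀ s, HasDerivAt (fun y => g y + m * y) (deriv g s + m) s := by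
      intro s
      have h1 : HasDerivAt (fun y => m * y) m s := by
        simpa using (hasDerivAt_id s).const_mul m
      exact ((hg.differentiable (by simp) s).hasDerivAt).add h1
    have key := Convex.norm_image_sub_le_of_norm_deriv_le (f := fun y => g y + m * y)
      (s := Icc a t) (fun s _ => (hφd s).differentiableAt)
      (C := L' * (t - a)) ?_ (convex_Icc a t) (left_mem_Icc.mpr ht.1)
      (right_mem_Icc.mpr ht.1)
    · have : g t + m * t - (g a + m * a) = g t - g a + m * (t - a) := by ring
      calc |g t - g a + m * (t - a)| = ‖g t + m * t - (g a + m * a)‖ := by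
            rw [Real.norm_eq_abs, this]
        _ ≤ L' * (t - a) * ‖t - a‖ := key
        _ = L' * (t - a) ^ 2 := by
            rw [Real.norm_eq_abs, abs_of_nonneg (sub_nonneg.mpr ht.1)]; ring
    · intro s hs
      rw [(hφd s).deriv]
      have hs' : s ∈ Icc a b := ⟨hs.1, le_trans hs.2 ht.2⟩
      have := hlip s hs'
      rw [Real.norm_eq_abs]
      have heq : deriv g s + m = deriv g s - deriv g a := by rw [hmdef]; ring
      rw [heq]
      calc |deriv g s - deriv g a| ≤ L' * (s - a) := this
        _ ≤ L' * (t - a) := by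
            apply mul_le_mul_of_nonneg_left (by linarith [hs.2]) hL'0.le
  -- choice of δ
  set δ := min (b - a) (m / (2 * L')) with hδdef
  have hδ0 : 0 < δ := lt_min (by linarith) (by positivity)
  have hδb : a + δ ≤ b := by have := min_le_left (b - a) (m / (2 * L')); linarith
  have hδL : L' * δ ≤ m / 2 := by
    have h1 : δ ≤ m / (2 * L') := min_le_right _ _
    calc L' * δ ≤ L' * (m / (2 * L')) := mul_le_mul_of_nonneg_left h1 hL'0.le
      _ = m / 2 := by field_simp
  -- upper bound on g on main interval
  have hub : ∀ t ∈ Icc a (a + δ), g t - g a ≤ -(m / 2) * (t - a) := by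
    intro t ht
    have ht' : t ∈ Icc a b := ⟨ht.1, le_trans ht.2 hδb⟩
    have h1 := (abs_le.mp (htay t ht')).2
    have hta : 0 ≤ t - a := sub_nonneg.mpr ht.1
    have htδ : t - a ≤ δ := by linarith [ht.2]
    have h2 : L' * (t - a) ≤ m / 2 := le_trans (mul_le_mul_of_nonneg_left htδ hL'0.le) hδL
    nlinarith [mul_le_mul_of_nonneg_right h2 hta]
  -- tail gap
  obtain ⟨tm, htm, hmax⟩ := (isCompact_Icc (a := a + δ) (b := b)).exists_isMaxOn
    ⟨a + δ, left_mem_Icc.mpr hδb⟩ hgc.continuousOn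
  set c := g a - g tm with hcdef
  have hc0 : 0 < c := by
    have : g tm < g a := hneg tm ⟨by linarith [htm.1], htm.2⟩
    simp [hcdef]; linarith
  have hcb : ∀ t ∈ Icc (a + δ) b, g t - g a ≤ -c := by
    intro t ht
    have := hmax ht
    have h2 : g t ≤ g tm := this
    simp [hcdef]; linarith
  clear_value m L' δ c
  clear hmdef hL'def hδdef hcdef
  have hCpos : 0 < 256 * L' / m ^ 3 + 4 / (m ^ 3 * δ ^ 2) + 4 * (b - a) / c ^ 2 := by
    have h1 : 0 < 256 * L' / m ^ 3 := div_pos (by linarith) (pow_pos hm0 3)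
    have h2 : 0 < 4 / (m ^ 3 * δ ^ 2) := div_pos (by norm_num)
      (mul_pos (pow_pos hm0 3) (pow_pos hδ0 2))
    have h3 : 0 < 4 * (b - a) / c ^ 2 := div_pos (by linarith) (pow_pos hc0 2)
    linarith
  refine ⟨256 * L' / m ^ 3 + 4 / (m ^ 3 * δ ^ 2) + 4 * (b - a) / c ^ 2, hCpos, ?_⟩
  intro h hh0 hh1
  have hcont1 : Continuous (fun t => Real.exp ((g t - g a) / h)) :=
    Real.continuous_exp.comp ((hgc.sub continuous_const).div_const h)
  have hint1 : ∀ p q : ℝ, IntervalIntegrable (fun t => Real.exp ((g t - g a) / h)) volume p q :=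
    fun p q => hcont1.intervalIntegrable p q
  have hcont2 : Continuous (fun t => Real.exp (-(m / h) * (t - a))) :=
    Real.continuous_exp.comp (continuous_const.mul (continuous_id.sub continuous_const))
  have hint2 : ∀ p q : ℝ, IntervalIntegrable (fun t => Real.exp (-(m / h) * (t - a))) volume p q :=
    fun p q => hcont2.intervalIntegrable p q
  have hcont3 : Continuous (fun t => Real.exp (-(m / (4 * h)) * (t - a))) :=
    Real.continuous_exp.comp (continuous_const.mul (continuous_id.sub continuous_const))
  have hint3 : ∀ p q : ℝ, IntervalIntegrable (fun t => Real.exp (-(m / (4 * h)) * (t - a)))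
      volume p q := fun p q => hcont3.intervalIntegrable p q
  have hsplit : (∫ t in a..b, Real.exp ((g t - g a) / h))
      = (∫ t in a..(a + δ), Real.exp ((g t - g a) / h))
        + ∫ t in (a + δ)..b, Real.exp ((g t - g a) / h) :=
    (intervalIntegral.integral_add_adjacent_intervals (hint1 _ _) (hint1 _ _)).symm
  set T1 := ∫ t in a..(a + δ), Real.exp ((g t - g a) / h) with hT1def
  set T2 := ∫ t in (a + δ)..b, Real.exp ((g t - g a) / h) with hT2def
  set I := ∫ t in a..(a + δ), Real.exp (-(m / h) * (t - a)) with hIdef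
  have hmh : 0 < m / h := div_pos hm0 hh0
  have hlam : -(m / h) ≠ 0 := by linarith
  have hI' : I = h / m * (1 - Real.exp (-(m / h) * δ)) := by
    rw [hIdef, integral_exp_aff _ _ _ hlam, add_sub_cancel_left]
    field_simp [hm0.ne', hh0.ne']
    ring
  clear_value T1 T2 I
  have hhm : 0 < h / m := div_pos hh0 hm0
  -- bound |I - h/m|
  have hIb : |I - h / m| ≤ 4 / (m ^ 3 * δ ^ 2) * h ^ 2 := by
    rw [hI']
    have he1 : Real.exp (-(m / h) * δ) ≤ 4 / (m * δ / h) ^ 2 := by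
      have := exp_neg_le (y := m * δ / h) (div_pos (mul_pos hm0 hδ0) hh0)
      have heq : -(m * δ / h) = -(m / h) * δ := by ring
      rwa [heq] at this
    have he0 : 0 < Real.exp (-(m / h) * δ) := Real.exp_pos _
    have heq2 : h / m * (1 - Real.exp (-(m / h) * δ)) - h / m
        = -(h / m * Real.exp (-(m / h) * δ)) := by ring
    rw [heq2, abs_neg, abs_of_pos (mul_pos hhm he0)]
    have h2 : h / m * Real.exp (-(m / h) * δ) ≤ h / m * (4 / (m * δ / h) ^ 2) :=
      mul_le_mul_of_nonneg_left he1 hhm.le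
    have h3 : h / m * (4 / (m * δ / h) ^ 2) = 4 / (m ^ 3 * δ ^ 2) * h ^ 2 * h := by
      field_simp
    have hc4 : 0 ≤ 4 / (m ^ 3 * δ ^ 2) * h ^ 2 :=
      mul_nonneg (le_of_lt (div_pos (by norm_num)
        (mul_pos (pow_pos hm0 3) (pow_pos hδ0 2)))) (sq_nonneg h)
    have h4 : 4 / (m ^ 3 * δ ^ 2) * h ^ 2 * h ≤ 4 / (m ^ 3 * δ ^ 2) * h ^ 2 * 1 :=
      mul_le_mul_of_nonneg_left hh1.le hc4
    rw [h3] at h2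
    linarith
  -- pointwise bound on the main interval
  have hptw : ∀ t ∈ Icc a (a + δ),
      |Real.exp ((g t - g a) / h) - Real.exp (-(m / h) * (t - a))|
        ≤ 64 * L' * h / m ^ 2 * Real.exp (-(m / (4 * h)) * (t - a)) := by
    intro t ht
    have hta : 0 ≤ t - a := sub_nonneg.mpr ht.1
    have ht' : t ∈ Icc a b := ⟨ht.1, le_trans ht.2 hδb⟩
    have hu : (g t - g a) / h ≤ -(m / 2) * (t - a) / h :=
      (div_le_div_iff_of_pos_right hh0).mpr (hub t ht)
    have hv : -(m / h) * (t - a) ≤ -(m / 2) * (t - a) / h := by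
      rw [show -(m / h) * (t - a) = (-(m * (t - a))) / h by ring,
        show -(m / 2) * (t - a) / h = (-(m / 2 * (t - a))) / h by ring]
      exact (div_le_div_iff_of_pos_right hh0).mpr (by nlinarith)
    have hw := exp_diff_le hu hv
    have habs : |(g t - g a) / h - -(m / h) * (t - a)| ≤ L' * (t - a) ^ 2 / h := by
      rw [show (g t - g a) / h - -(m / h) * (t - a) = (g t - g a + m * (t - a)) / h by ring,
        abs_div, abs_of_pos hh0]
      exact (div_le_div_iff_of_pos_right hh0).mpr (htay t ht')
    have step1 : |Real.exp ((g t - g a) / h) - Real.exp (-(m / h) * (t - a))|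
        ≤ Real.exp (-(m / 2) * (t - a) / h) * (L' * (t - a) ^ 2 / h) :=
      le_trans hw (mul_le_mul_of_nonneg_left habs (Real.exp_pos _).le)
    have h64 : (t - a) ^ 2 * Real.exp (-(m / (4 * h)) * (t - a)) ≤ 64 * h ^ 2 / m ^ 2 := by
      have h4 := sq_le_four_exp (y := m * (t - a) / (4 * h))
        (div_nonneg (mul_nonneg hm0.le hta) (by linarith))
      have hexp : Real.exp (-(m / (4 * h)) * (t - a))
          = (Real.exp (m * (t - a) / (4 * h)))⁻¹ := by
        rw [← Real.exp_neg]; ring_nf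
      rw [hexp, mul_inv_le_iff₀ (Real.exp_pos _)]
      rw [div_pow, div_le_iff₀ (pow_pos (by linarith : (0:ℝ) < 4 * h) 2)] at h4
      have h5 : (m * (t - a)) ^ 2 = m ^ 2 * (t - a) ^ 2 := by ring
      have h6 : 4 * Real.exp (m * (t - a) / (4 * h)) * (4 * h) ^ 2
          = 64 * h ^ 2 * Real.exp (m * (t - a) / (4 * h)) := by ring
      rw [h5, h6] at h4
      rw [div_mul_eq_mul_div, le_div_iff₀ (pow_pos hm0 2)]
      linarith [h4]
    have hsplit2 : Real.exp (-(m / 2) * (t - a) / h)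
        = Real.exp (-(m / (4 * h)) * (t - a)) * Real.exp (-(m / (4 * h)) * (t - a)) := by
      rw [← Real.exp_add]; ring_nf
    have hE2 := Real.exp_pos (-(m / (4 * h)) * (t - a))
    calc |Real.exp ((g t - g a) / h) - Real.exp (-(m / h) * (t - a))|
        ≤ Real.exp (-(m / 2) * (t - a) / h) * (L' * (t - a) ^ 2 / h) := step1
      _ = (L' / h) * ((t - a) ^ 2 * Real.exp (-(m / (4 * h)) * (t - a)))
          * Real.exp (-(m / (4 * h)) * (t - a)) := by rw [hsplit2]; ring
      _ ≤ (L' / h) * (64 * h ^ 2 / m ^ 2) * Real.exp (-(m / (4 * h)) * (t - a)) := by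
          apply mul_le_mul_of_nonneg_right _ hE2.le
          exact mul_le_mul_of_nonneg_left h64 (div_nonneg hL'0.le hh0.le)
      _ = 64 * L' * h / m ^ 2 * Real.exp (-(m / (4 * h)) * (t - a)) := by
          field_simp
  -- bound |T1 - I|
  have hT1b : |T1 - I| ≤ 256 * L' / m ^ 3 * h ^ 2 := by
    have hdiff : T1 - I = ∫ t in a..(a + δ),
        (Real.exp ((g t - g a) / h) - Real.exp (-(m / h) * (t - a))) := by
      rw [hT1def, hIdef]
      exact (intervalIntegral.integral_sub (hint1 _ _) (hint2 _ _)).symm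
    have hab' : a ≤ a + δ := by linarith
    have hcontabs : Continuous (fun t =>
        |Real.exp ((g t - g a) / h) - Real.exp (-(m / h) * (t - a))|) :=
      (hcont1.sub hcont2).abs
    have hJ : (∫ t in a..(a + δ), Real.exp (-(m / (4 * h)) * (t - a))) ≤ 4 * h / m := by
      have hmh4 : 0 < m / (4 * h) := div_pos hm0 (by linarith)
      have hlam4 : -(m / (4 * h)) ≠ 0 := by linarith
      rw [integral_exp_aff _ _ _ hlam4, add_sub_cancel_left]
      set E := Real.exp (-(m / (4 * h)) * δ) with hEdef
      have hE3 : 0 < E := Real.exp_pos _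
      have hE4 : E ≤ 1 := by
        rw [hEdef]
        apply Real.exp_le_one_iff.mpr
        nlinarith [mul_pos hmh4 hδ0]
      have heq : (E - 1) / (-(m / (4 * h))) = (1 - E) * (4 * h / m) := by
        field_simp [hm0.ne', hh0.ne']
        ring
      rw [heq]
      have h5 : 0 < 4 * h / m := div_pos (by linarith) hm0
      have h7 := mul_le_mul_of_nonneg_right (show 1 - E ≤ 1 by linarith) h5.le
      linarith
    have h6 : 0 ≤ 64 * L' * h / m ^ 2 :=
      le_of_lt (div_pos (by positivity) (pow_pos hm0 2))
    calc |T1 - I| = |∫ t in a..(a + δ),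
          (Real.exp ((g t - g a) / h) - Real.exp (-(m / h) * (t - a)))| := by rw [hdiff]
      _ ≤ ∫ t in a..(a + δ),
          |Real.exp ((g t - g a) / h) - Real.exp (-(m / h) * (t - a))| :=
          intervalIntegral.abs_integral_le_integral_abs hab'
      _ ≤ ∫ t in a..(a + δ), 64 * L' * h / m ^ 2 * Real.exp (-(m / (4 * h)) * (t - a)) :=
          intervalIntegral.integral_mono_on hab' (hcontabs.intervalIntegrable _ _)
            ((continuous_const.mul hcont3).intervalIntegrable _ _) hptw
      _ = 64 * L' * h / m ^ 2 * ∫ t in a..(a + δ), Real.exp (-(m / (4 * h)) * (t - a)) :=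
          intervalIntegral.integral_const_mul _ _
      _ ≤ 64 * L' * h / m ^ 2 * (4 * h / m) := mul_le_mul_of_nonneg_left hJ h6
      _ = 256 * L' / m ^ 3 * h ^ 2 := by field_simp; ring
  -- bounds on T2
  have hT2a : 0 ≤ T2 := by
    rw [hT2def]
    exact intervalIntegral.integral_nonneg hδb (fun t _ => (Real.exp_pos _).le)
  have hT2b : T2 ≤ 4 * (b - a) / c ^ 2 * h ^ 2 := by
    have hch : 0 < c / h := div_pos hc0 hh0
    have hexp2 : Real.exp (-(c / h)) ≤ 4 * h ^ 2 / c ^ 2 := by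
      have := exp_neg_le hch
      have heq : 4 / (c / h) ^ 2 = 4 * h ^ 2 / c ^ 2 := by
        field_simp
      linarith [this, heq ▸ this]
    calc T2 = ∫ t in (a + δ)..b, Real.exp ((g t - g a) / h) := hT2def
      _ ≤ ∫ _t in (a + δ)..b, Real.exp (-(c / h)) := by
          apply intervalIntegral.integral_mono_on hδb (hint1 _ _)
            (intervalIntegrable_const) ?_
          intro t ht
          apply Real.exp_le_exp.mpr
          rw [show -(c / h) = (-c) / h by ring]
          exact (div_le_div_iff_of_pos_right hh0).mpr (hcb t ht)
      _ = (b - (a + δ)) * Real.exp (-(c / h)) := by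
          rw [intervalIntegral.integral_const, smul_eq_mul]
      _ ≤ (b - a) * (4 * h ^ 2 / c ^ 2) := by
          apply mul_le_mul (by linarith) hexp2 (Real.exp_pos _).le (by linarith)
      _ = 4 * (b - a) / c ^ 2 * h ^ 2 := by ring
  -- combine
  rw [hsplit]
  have habs2 : |T1 + T2 - h / m| ≤ |T1 - I| + |I - h / m| + |T2| := by
    have heq : T1 + T2 - h / m = (T1 - I) + (I - h / m) + T2 := by ring
    rw [heq]
    calc |(T1 - I) + (I - h / m) + T2| ≤ |(T1 - I) + (I - h / m)| + |T2| := abs_add_le _ _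
      _ ≤ |T1 - I| + |I - h / m| + |T2| := by linarith [abs_add_le (T1 - I) (I - h / m)]
  rw [abs_of_nonneg hT2a] at habs2
  have hsum : (256 * L' / m ^ 3 + 4 / (m ^ 3 * δ ^ 2) + 4 * (b - a) / c ^ 2) * h ^ 2
      = 256 * L' / m ^ 3 * h ^ 2 + 4 / (m ^ 3 * δ ^ 2) * h ^ 2
        + 4 * (b - a) / c ^ 2 * h ^ 2 := by ring
  rw [hsum]
  linarith

lemma laplace_endpoint' (g : ℝ → ℝ) (hg : ContDiff ℝ (⊤:ℕ∞) g) (a b : ℝ) (hab : a < b)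
    (hneg : ∀ t ∈ Set.Ico a b, g t < g b) (hm : 0 < deriv g b) :
    ∃ C > (0:ℝ), ∀ h : ℝ, 0 < h → h < 1 →
      |(∫ t in a..b, Real.exp ((g t - g b) / h)) - h / (deriv g b)| ≤ C * h^2 := by
  set G := fun t => g (a + b - t) with hGdef
  have hG : ContDiff ℝ (⊤:ℕ∞) G := hg.comp (contDiff_const.sub contDiff_id)
  have hGa : deriv G a = -(deriv g b) := by
    have hinner : HasDerivAt (fun t : ℝ => a + b - t) (-1) a := by
      simpa using (hasDerivAt_id a).const_sub (a + b)
    have houter : HasDerivAt g (deriv g (a + b - a)) (a + b - a) :=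
      (hg.differentiable (by simp) (a + b - a)).hasDerivAt
    have hcomp := HasDerivAt.comp a houter hinner
    have := hcomp.deriv
    rw [show a + b - a = b by ring, mul_neg_one] at this
    exact this
  have hGneg : ∀ t ∈ Set.Ioc a b, G t < G a := by
    intro t ht
    have h1 : a + b - t ∈ Set.Ico a b := ⟨by linarith [ht.2], by linarith [ht.1]⟩
    have := hneg _ h1
    simpa [hGdef] using this
  have hGm : deriv G a < 0 := by rw [hGa]; linarith
  obtain ⟨C, hC, hbound⟩ := laplace_endpoint G hG a b hab hGneg hGm
  refine ⟨C, hC, ?_⟩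
  intro h hh0 hh1
  have hb := hbound h hh0 hh1
  have hrefl : (∫ t in a..b, Real.exp ((G t - G a) / h))
      = ∫ t in a..b, Real.exp ((g t - g b) / h) := by
    have h1 : (∫ t in a..b, Real.exp ((G t - G a) / h))
        = ∫ t in a..b, (fun s => Real.exp ((g s - g b) / h)) (a + b - t) := by
      apply intervalIntegral.integral_congr
      intro t _
      simp [hGdef]
    rw [h1, intervalIntegral.integral_comp_sub_left (fun s => Real.exp ((g s - g b) / h)) (a + b)]
    simp
  rw [hrefl, hGa] at hb
  simpa using hb

set_option maxHeartbeats 2000000 in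
/-- One-dimensional Laplace asymptotics for the exit probability:
under the stated assumptions on `f`, for fixed `x ∈ (z₁,z₂)` with `f(x) < f(z₁)`,
as `h → 0`,
`w_h(x) = −(f'(z₂)/f'(z₁)) e^{−(2/h)(f(z₂)−f(z₁))} (1 + O(h))`. -/
theorem one_dim_exit_probability_asymptotics (f : ℝ → ℝ) (hf : ContDiff ℝ (⊤ : ℕ∞) f)
    (z₁ z₂ : ℝ) (hz : z₁ < z₂)
    (hd1 : deriv f z₁ < 0) (hd2 : 0 < deriv f z₂) (hf12 : f z₁ < f z₂)
    (hcrit : ∃! x₀ : ℝ, x₀ ∈ Set.Ioo z₁ z₂ ∧ deriv f x₀ = 0)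
    (x : ℝ) (hx : x ∈ Set.Ioo z₁ z₂) (hfx : f x < f z₁) :
    ∃ C > (0:ℝ), ∃ h₀ > (0:ℝ), ∀ h : ℝ, 0 < h → h < h₀ → ∃ r : ℝ, |r| ≤ C ∧
      (∫ t in z₁..x, Real.exp (2 * f t / h)) / (∫ t in z₁..z₂, Real.exp (2 * f t / h))
        = -(deriv f z₂ / deriv f z₁) * Real.exp (-(2 / h) * (f z₂ - f z₁)) * (1 + r * h) := by
  obtain ⟨x₀, ⟨hx₀mem, hx₀crit⟩, huniq⟩ := hcrit
  have hfd : Differentiable ℝ f := hf.differentiable (by simp)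
  have hdc : Continuous (deriv f) := (contDiff_infty_iff_deriv.mp hf).2.continuous
  -- sign of deriv f
  have hd_neg : ∀ t ∈ Set.Ioo z₁ x₀, deriv f t < 0 := by
    intro t ht
    by_contra hcon
    push_neg at hcon
    rcases eq_or_lt_of_le hcon with heq | hlt
    · exact absurd (huniq t ⟨⟨ht.1, lt_trans ht.2 hx₀mem.2⟩, heq.symm⟩) (ne_of_lt ht.2)
    · obtain ⟨s, hs, hs0⟩ := intermediate_value_Icc (le_of_lt ht.1) hdc.continuousOn
        ⟨hd1.le, hlt.le⟩
      have hs1 : z₁ < s := by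
        rcases eq_or_lt_of_le hs.1 with h | h
        · exact absurd (h ▸ hs0) (ne_of_lt hd1)
        · exact h
      have := huniq s ⟨⟨hs1, lt_of_le_of_lt hs.2 (lt_trans ht.2 hx₀mem.2)⟩, hs0⟩
      exact absurd this (ne_of_lt (lt_of_le_of_lt hs.2 ht.2))
  have hd_pos : ∀ t ∈ Set.Ioo x₀ z₂, 0 < deriv f t := by
    intro t ht
    by_contra hcon
    push_neg at hcon
    rcases eq_or_lt_of_le hcon with heq | hlt
    · exact absurd (huniq t ⟨⟨lt_trans hx₀mem.1 ht.1, ht.2⟩, heq⟩) (ne_of_gt ht.1)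
    · obtain ⟨s, hs, hs0⟩ := intermediate_value_Icc (le_of_lt ht.2) hdc.continuousOn
        ⟨hlt.le, hd2.le⟩
      have hs1 : s < z₂ := by
        rcases eq_or_lt_of_le hs.2 with h | h
        · exact absurd (h ▸ hs0) (ne_of_gt hd2)
        · exact h
      have := huniq s ⟨⟨lt_trans hx₀mem.1 (lt_of_lt_of_le ht.1 hs.1), hs1⟩, hs0⟩
      exact absurd this (ne_of_gt (lt_of_lt_of_le ht.1 hs.1))
  -- monotonicity
  have hanti : StrictAntiOn f (Set.Icc z₁ x₀) := by
    apply strictAntiOn_of_deriv_neg (convex_Icc z₁ x₀) hf.continuous.continuousOn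
    intro t ht
    rw [interior_Icc] at ht
    exact hd_neg t ht
  have hmono : StrictMonoOn f (Set.Icc x₀ z₂) := by
    apply strictMonoOn_of_deriv_pos (convex_Icc x₀ z₂) hf.continuous.continuousOn
    intro t ht
    rw [interior_Icc] at ht
    exact hd_pos t ht
  -- f below endpoints
  have hneg1 : ∀ t ∈ Set.Ioc z₁ x, f t < f z₁ := by
    intro t ht
    rcases le_or_gt t x₀ with h | h
    · exact hanti (left_mem_Icc.mpr hx₀mem.1.le) ⟨ht.1.le, h⟩ ht.1
    · have hxx : f t ≤ f x := by
        rcases eq_or_lt_of_le ht.2 with he | hlt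
        · rw [he]
        · exact (hmono ⟨h.le, le_trans ht.2 hx.2.le⟩ ⟨le_trans h.le ht.2, hx.2.le⟩ hlt).le
      linarith
  have hneg2 : ∀ t ∈ Set.Ico z₁ z₂, f t < f z₂ := by
    intro t ht
    rcases le_or_gt t x₀ with h | h
    · have : f t ≤ f z₁ := by
        rcases eq_or_lt_of_le ht.1 with he | hlt
        · rw [← he]
        · exact (hanti (left_mem_Icc.mpr hx₀mem.1.le) ⟨ht.1, h⟩ hlt).le
      linarith
    · exact hmono ⟨h.le, ht.2.le⟩ (right_mem_Icc.mpr hx₀mem.2.le) ht.2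
  -- apply Laplace lemmas
  have hg1 : ContDiff ℝ (⊤:ℕ∞) (fun t => 2 * f t) := contDiff_const.mul hf
  have hdg1 : deriv (fun t => 2 * f t) z₁ = 2 * deriv f z₁ := by
    rw [deriv_const_mul 2 (hfd z₁)]
  have hdg2 : deriv (fun t => 2 * f t) z₂ = 2 * deriv f z₂ := by
    rw [deriv_const_mul 2 (hfd z₂)]
  obtain ⟨C₁, hC₁, hb1⟩ := laplace_endpoint (fun t => 2 * f t) hg1 z₁ x hx.1
    (fun t ht => by have := hneg1 t ht; simpa using by linarith)
    (by rw [hdg1]; linarith)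
  obtain ⟨C₂, hC₂, hb2⟩ := laplace_endpoint' (fun t => 2 * f t) hg1 z₁ z₂ hz
    (fun t ht => by have := hneg2 t ht; simpa using by linarith)
    (by rw [hdg2]; linarith)
  rw [hdg1] at hb1
  rw [hdg2] at hb2
  set d₁ := deriv f z₁ with hd₁def
  set d₂ := deriv f z₂ with hd₂def
  have hd₁ne : d₁ ≠ 0 := ne_of_lt hd1
  have hd₂ne : d₂ ≠ 0 := ne_of_gt hd2
  set m₁ := -(2 * d₁) with hm₁def
  set m₂ := 2 * d₂ with hm₂def
  have hm₁0 : 0 < m₁ := by rw [hm₁def]; linarith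
  have hm₂0 : 0 < m₂ := by rw [hm₂def]; linarith
  have hCpos : 0 < 2 * (m₁ * C₁ + m₂ * C₂) := by positivity
  refine ⟨2 * (m₁ * C₁ + m₂ * C₂), hCpos, min 1 (1 / (2 * m₂ * C₂)),
    lt_min one_pos (by positivity), ?_⟩
  intro h hh0 hhlt
  have hh1 : h < 1 := lt_of_lt_of_le hhlt (min_le_left _ _)
  have hhc : h < 1 / (2 * m₂ * C₂) := lt_of_lt_of_le hhlt (min_le_right _ _)
  have hb1h := hb1 h hh0 hh1
  have hb2h := hb2 h hh0 hh1
  set A := ∫ t in z₁..x, Real.exp ((2 * f t - 2 * f z₁) / h) with hAdef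
  set B := ∫ t in z₁..z₂, Real.exp ((2 * f t - 2 * f z₂) / h) with hBdef
  have hu : |m₁ * A / h - 1| ≤ m₁ * C₁ * h := by
    have heq : m₁ * A / h - 1 = (m₁ / h) * (A - h / m₁) := by
      field_simp
    rw [heq, abs_mul, abs_of_pos (div_pos hm₁0 hh0)]
    calc m₁ / h * |A - h / m₁| ≤ m₁ / h * (C₁ * h ^ 2) :=
          mul_le_mul_of_nonneg_left hb1h (div_pos hm₁0 hh0).le
      _ = m₁ * C₁ * h := by field_simp
  have hv : |m₂ * B / h - 1| ≤ m₂ * C₂ * h := by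
    have heq : m₂ * B / h - 1 = (m₂ / h) * (B - h / m₂) := by
      field_simp
    rw [heq, abs_mul, abs_of_pos (div_pos hm₂0 hh0)]
    calc m₂ / h * |B - h / m₂| ≤ m₂ / h * (C₂ * h ^ 2) :=
          mul_le_mul_of_nonneg_left hb2h (div_pos hm₂0 hh0).le
      _ = m₂ * C₂ * h := by field_simp
  set u := m₁ * A / h - 1 with hudef
  set v := m₂ * B / h - 1 with hvdef
  clear_value u v A B m₁ m₂ d₁ d₂
  have hv2 : |v| ≤ 1 / 2 := by
    have h2 : m₂ * C₂ * h ≤ 1 / 2 := by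
      rw [lt_div_iff₀ (by positivity : (0:ℝ) < 2 * m₂ * C₂)] at hhc
      nlinarith
    linarith [hv]
  have h1v : (0:ℝ) < 1 + v := by have := abs_le.mp hv2; linarith
  refine ⟨(u - v) / ((1 + v) * h), ?_, ?_⟩
  · rw [abs_div, abs_of_pos (mul_pos h1v hh0), div_le_iff₀ (mul_pos h1v hh0)]
    have habs : |u - v| ≤ (m₁ * C₁ + m₂ * C₂) * h :=
      calc |u - v| ≤ |u| + |v| := abs_sub _ _
        _ ≤ m₁ * C₁ * h + m₂ * C₂ * h := add_le_add hu hv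
        _ = (m₁ * C₁ + m₂ * C₂) * h := by ring
    have hvge : (1:ℝ) / 2 ≤ 1 + v := by have := abs_le.mp hv2; linarith
    have hK0 : 0 < m₁ * C₁ + m₂ * C₂ := add_pos (mul_pos hm₁0 hC₁) (mul_pos hm₂0 hC₂)
    nlinarith [mul_nonneg (mul_pos hK0 hh0).le (show (0:ℝ) ≤ 2 * (1 + v) - 1 by linarith)]
  · have hN : (∫ t in z₁..x, Real.exp (2 * f t / h)) = Real.exp (2 * f z₁ / h) * A := by
      rw [hAdef, ← intervalIntegral.integral_const_mul]
      apply intervalIntegral.integral_congr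
      intro t _
      show Real.exp (2 * f t / h) = Real.exp (2 * f z₁ / h) * Real.exp ((2 * f t - 2 * f z₁) / h)
      rw [← Real.exp_add]
      congr 1
      field_simp
      ring
    have hD : (∫ t in z₁..z₂, Real.exp (2 * f t / h)) = Real.exp (2 * f z₂ / h) * B := by
      rw [hBdef, ← intervalIntegral.integral_const_mul]
      apply intervalIntegral.integral_congr
      intro t _
      show Real.exp (2 * f t / h) = Real.exp (2 * f z₂ / h) * Real.exp ((2 * f t - 2 * f z₂) / h)
      rw [← Real.exp_add]
      congr 1
      field_simp
      ring
    have hA' : A = h * (1 + u) / m₁ := by rw [hudef]; field_simp; ring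
    have hB' : B = h * (1 + v) / m₂ := by rw [hvdef]; field_simp; ring
    have hEq : Real.exp (-(2 / h) * (f z₂ - f z₁))
        = Real.exp (2 * f z₁ / h) / Real.exp (2 * f z₂ / h) := by
      rw [← Real.exp_sub]
      congr 1
      field_simp
      ring
    rw [hN, hD, hA', hB', hEq, hm₁def, hm₂def]
    have hE2 := Real.exp_ne_zero (2 * f z₂ / h)
    field_simp
    ring
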